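/- Assume ω₀ ≤ −(n−1) and that λ has bounded derivatives of all orders, i.e. for every integer k ≥ 0 there is a constant c_k with |λ^{(k)}(t)| ≤ c_k for all t ∈ ℝ. Then every brane scale function f satisfies the ARW conditions with constant γ̃ = (n−1)/2 and mass m̃ = m; in particular lim_{τ→0⁻} f′(τ)²·e^{(n−1)f(τ)} = m. -/

import Mathlib

open Real Filter Set Topology

private lemma nat_le_infty (k : ℕ) : (k : WithTop ℕ∞) ≤ ((⊤:ℕ∞) : WithTop ℕ∞) := by
  exact_mod_cast le_top

/-- "ray tame": smooth with all iterated derivatives bounded on every ray `(-∞, T]`. -/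
private def RT (g : ℝ → ℝ) : Prop :=
  ContDiff ℝ (⊤ : ℕ∞) g ∧ ∀ T : ℝ, ∀ k : ℕ, ∃ c : ℝ, ∀ u ≤ T, |iteratedDeriv k g u| ≤ c

private lemma iteratedDeriv_add' {g₁ g₂ : ℝ → ℝ} (h₁ : ContDiff ℝ (⊤:ℕ∞) g₁)
    (h₂ : ContDiff ℝ (⊤:ℕ∞) g₂) (k : ℕ) (u : ℝ) :
    iteratedDeriv k (fun x => g₁ x + g₂ x) u = iteratedDeriv k g₁ u + iteratedDeriv k g₂ u := by
  have : (fun x => g₁ x + g₂ x) = g₁ + g₂ := rfl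
  rw [this, ← iteratedDerivWithin_univ, ← iteratedDerivWithin_univ, ← iteratedDerivWithin_univ]
  exact iteratedDerivWithin_add (mem_univ u) uniqueDiffOn_univ
    ((h₁.of_le (nat_le_infty k)).contDiffWithinAt) ((h₂.of_le (nat_le_infty k)).contDiffWithinAt)

private lemma RT.add {g₁ g₂ : ℝ → ℝ} (h₁ : RT g₁) (h₂ : RT g₂) : RT (fun u => g₁ u + g₂ u) := by
  refine ⟨h₁.1.add h₂.1, fun T k => ?_⟩
  obtain ⟨c₁, hc₁⟩ := h₁.2 T k
  obtain ⟨c₂, hc₂⟩ := h₂.2 T k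
  refine ⟨c₁ + c₂, fun u hu => ?_⟩
  rw [iteratedDeriv_add' h₁.1 h₂.1]
  exact (abs_add_le _ _).trans (add_le_add (hc₁ u hu) (hc₂ u hu))

private lemma iteratedDeriv_zero_fun (k : ℕ) (u : ℝ) :
    iteratedDeriv k (fun _ : ℝ => (0:ℝ)) u = 0 := by
  induction k generalizing u with
  | zero => simp
  | succ j ih =>
    rw [iteratedDeriv_succ', show deriv (fun _ : ℝ => (0:ℝ)) = fun _ => 0 by
      funext x; exact deriv_const x 0]
    exact ih u

private lemma RT_const (c : ℝ) : RT (fun _ => c) := by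
  refine ⟨contDiff_const, fun T k => ⟨|c|, fun u _ => ?_⟩⟩
  rcases Nat.eq_zero_or_pos k with rfl | hk
  · simp
  · obtain ⟨j, rfl⟩ := Nat.exists_eq_succ_of_ne_zero hk.ne'
    rw [iteratedDeriv_succ', show deriv (fun _ : ℝ => c) = fun _ => 0 by
      funext x; exact deriv_const x c, iteratedDeriv_zero_fun]
    simp

private lemma RT.deriv {g : ℝ → ℝ} (h : RT g) : RT (fun u => _root_.deriv g u) := by
  have hd : ContDiff ℝ (⊤:ℕ∞) (_root_.deriv g) := (contDiff_infty_iff_deriv.1 h.1).2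
  refine ⟨hd, fun T k => ?_⟩
  obtain ⟨c, hc⟩ := h.2 T (k+1)
  exact ⟨c, fun u hu => by rw [show (fun u => _root_.deriv g u) = _root_.deriv g from rfl,
    ← iteratedDeriv_succ']; exact hc u hu⟩

private lemma RT.mul {g₁ g₂ : ℝ → ℝ} (h₁ : RT g₁) (h₂ : RT g₂) : RT (fun u => g₁ u * g₂ u) := by
  refine ⟨h₁.1.mul h₂.1, fun T k => ?_⟩
  choose c₁ hc₁ using h₁.2 T
  choose c₂ hc₂ using h₂.2 T
  refine ⟨∑ i ∈ Finset.range (k+1), (k.choose i : ℝ) * |c₁ i| * |c₂ (k-i)|, fun u hu => ?_⟩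
  have hb := norm_iteratedFDeriv_mul_le (𝕜 := ℝ) (h₁.1.of_le (nat_le_infty k))
      (h₂.1.of_le (nat_le_infty k)) u (le_refl (k : WithTop ℕ∞))
  rw [show |iteratedDeriv k (fun u => g₁ u * g₂ u) u|
      = ‖iteratedFDeriv ℝ k (fun y => g₁ y * g₂ y) u‖ by
    rw [norm_iteratedFDeriv_eq_norm_iteratedDeriv, Real.norm_eq_abs]]
  refine hb.trans (Finset.sum_le_sum fun i hi => ?_)
  have e1 : ‖iteratedFDeriv ℝ i g₁ u‖ ≤ |c₁ i| := by
    rw [norm_iteratedFDeriv_eq_norm_iteratedDeriv, Real.norm_eq_abs]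
    exact (hc₁ i u hu).trans (le_abs_self _)
  have e2 : ‖iteratedFDeriv ℝ (k-i) g₂ u‖ ≤ |c₂ (k-i)| := by
    rw [norm_iteratedFDeriv_eq_norm_iteratedDeriv, Real.norm_eq_abs]
    exact (hc₂ (k-i) u hu).trans (le_abs_self _)
  have hn1 : (0:ℝ) ≤ (k.choose i : ℝ) := by positivity
  have := mul_le_mul (mul_le_mul_of_nonneg_left e1 hn1) e2 (norm_nonneg _)
    (by positivity)
  exact this

private lemma RT.const_mul {g : ℝ → ℝ} (c : ℝ) (h : RT g) : RT (fun u => c * g u) :=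
  (RT_const c).mul h

private lemma RT.sub {g₁ g₂ : ℝ → ℝ} (h₁ : RT g₁) (h₂ : RT g₂) : RT (fun u => g₁ u - g₂ u) := by
  have := h₁.add (h₂.const_mul (-1))
  simpa [sub_eq_add_neg, neg_one_mul] using this

/-- a continuous function with a limit at `-∞` is bounded on every ray `(-∞, T]`. -/
private lemma bdd_on_ray {g : ℝ → ℝ} {L : ℝ} (hc : Continuous g)
    (h0 : Tendsto g atBot (nhds L)) (T : ℝ) : ∃ M : ℝ, ∀ u ≤ T, |g u| ≤ M := by
  have : ∀ᶠ u in atBot, |g u - L| ≤ 1 := by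
    have h1 : {u : ℝ | g u ∈ Metric.closedBall L 1} ∈ atBot :=
      h0 (Metric.closedBall_mem_nhds L one_pos)
    filter_upwards [h1] with u hu
    simpa [Metric.mem_closedBall, Real.dist_eq] using hu
  obtain ⟨b, hb⟩ := eventually_atBot.1 this
  obtain ⟨C, hC⟩ := (isCompact_Icc (a := min b T) (b := T)).exists_bound_of_continuousOn
    hc.continuousOn
  refine ⟨max (|L| + 1) C, fun u hu => ?_⟩
  rcases le_or_gt u b with h | h
  · have := hb u h
    calc |g u| ≤ |g u - L| + |L| := by
          have := abs_sub_abs_le_abs_sub (g u) L; linarith [abs_sub_abs_le_abs_sub (g u) L]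
    _ ≤ |L| + 1 := by linarith
    _ ≤ _ := le_max_left _ _
  · have : u ∈ Icc (min b T) T := ⟨le_trans (min_le_left _ _) h.le, hu⟩
    exact le_trans (by simpa [Real.norm_eq_abs] using hC u this) (le_max_right _ _)

private lemma one_le_infty : (1 : WithTop ℕ∞) ≤ ((⊤:ℕ∞) : WithTop ℕ∞) := by
  exact_mod_cast le_top

private lemma RT.differentiable {g : ℝ → ℝ} (h : RT g) : Differentiable ℝ g :=
  h.1.differentiable (by simp)

/-- `exp (α u - β μt u)` is ray-tame when `α ≥ 0`, `μt' = lam` with `lam` ray-tame and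
`μt` bounded on rays. -/
private lemma RT_exp (lam μt : ℝ → ℝ) (hlamRT : RT lam)
    (hμt : ∀ t, HasDerivAt μt (lam t) t)
    (hμtb : ∀ T : ℝ, ∃ M, ∀ u ≤ T, |μt u| ≤ M)
    (α β : ℝ) (hα : 0 ≤ α) :
    RT (fun u => Real.exp (α*u - β*μt u)) := by
  have hμdiff : Differentiable ℝ μt := fun t => (hμt t).differentiableAt
  have hμderiv : _root_.deriv μt = lam := funext fun t => (hμt t).deriv
  have hμC : ContDiff ℝ (⊤:ℕ∞) μt :=
    contDiff_infty_iff_deriv.2 ⟨hμdiff, hμderiv ▸ hlamRT.1⟩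
  have hφC : ContDiff ℝ (⊤:ℕ∞) (fun u => α*u - β*μt u) :=
    (contDiff_const.mul contDiff_id).sub (contDiff_const.mul hμC)
  have hqC : ContDiff ℝ (⊤:ℕ∞) (fun u => Real.exp (α*u - β*μt u)) :=
    Real.contDiff_exp.comp hφC
  have hφ' : ∀ u : ℝ, HasDerivAt (fun u => α*u - β*μt u) (α - β * lam u) u := by
    intro u
    have h1 : HasDerivAt (fun u : ℝ => α*u) α u := by
      simpa using (hasDerivAt_id u).const_mul α
    exact h1.sub ((hμt u).const_mul β)
  have hq' : ∀ u : ℝ, HasDerivAt (fun u => Real.exp (α*u - β*μt u))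
      ((α - β*lam u) * Real.exp (α*u - β*μt u)) u := by
    intro u
    simpa [mul_comm] using (hφ' u).exp
  have claim : ∀ k : ℕ, ∃ r : ℝ → ℝ, RT r ∧
      ∀ u, iteratedDeriv k (fun u => Real.exp (α*u - β*μt u)) u
        = r u * Real.exp (α*u - β*μt u) := by
    intro k
    induction k with
    | zero => exact ⟨fun _ => 1, RT_const 1, by simp⟩
    | succ k ih =>
      obtain ⟨r, hr, hrq⟩ := ih
      refine ⟨fun u => _root_.deriv r u + r u * (α - β * lam u),
        (hr.deriv).add (hr.mul ((RT_const α).sub (hlamRT.const_mul β))), fun u => ?_⟩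
      rw [iteratedDeriv_succ,
        show iteratedDeriv k (fun u => Real.exp (α*u - β*μt u))
          = fun u => r u * Real.exp (α*u - β*μt u) from funext hrq]
      have hdr : HasDerivAt (fun u => r u * Real.exp (α*u - β*μt u))
          (_root_.deriv r u * Real.exp (α*u - β*μt u)
            + r u * ((α - β*lam u) * Real.exp (α*u - β*μt u))) u :=
        ((hr.differentiable u).hasDerivAt).mul (hq' u)
      rw [hdr.deriv]; ring
  refine ⟨hqC, fun T k => ?_⟩
  obtain ⟨r, hr, hrq⟩ := claim k
  obtain ⟨c, hc⟩ := hr.2 T 0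
  obtain ⟨M, hM⟩ := hμtb T
  refine ⟨|c| * Real.exp (α*T + |β| * M), fun u hu => ?_⟩
  rw [hrq u, abs_mul, abs_of_pos (Real.exp_pos _)]
  have h1 : |r u| ≤ |c| := by
    have := hc u hu; rw [iteratedDeriv_zero] at this; exact this.trans (le_abs_self c)
  have h2 : Real.exp (α*u - β*μt u) ≤ Real.exp (α*T + |β| * M) := by
    apply Real.exp_le_exp.2
    have e1 : α*u ≤ α*T := mul_le_mul_of_nonneg_left hu hα
    have e2 : -(β*μt u) ≤ |β| * |μt u| := by
      rw [← abs_mul]; exact neg_le_abs _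
    have e3 : |β| * |μt u| ≤ |β| * M :=
      mul_le_mul_of_nonneg_left (hM u hu) (abs_nonneg β)
    linarith
  exact mul_le_mul h1 h2 (Real.exp_pos _).le (abs_nonneg c)

private lemma iteratedDeriv_congr_of_isOpen {g₁ g₂ : ℝ → ℝ} {U : Set ℝ} (hU : IsOpen U)
    (h : ∀ x ∈ U, g₁ x = g₂ x) (k : ℕ) : ∀ x ∈ U, iteratedDeriv k g₁ x = iteratedDeriv k g₂ x := by
  induction k with
  | zero => simpa using h
  | succ k ih =>
    intro x hx
    rw [iteratedDeriv_succ, iteratedDeriv_succ]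
    exact Filter.EventuallyEq.deriv_eq (Filter.eventuallyEq_of_mem (hU.mem_nhds hx) ih)

private lemma abs_iteratedDeriv_eq_within {g : ℝ → ℝ} {U : Set ℝ} (hU : IsOpen U) {x : ℝ}
    (hx : x ∈ U) (k : ℕ) : |iteratedDeriv k g x| = ‖iteratedFDerivWithin ℝ k g U x‖ := by
  rw [iteratedFDerivWithin_of_isOpen k hU hx, norm_iteratedFDeriv_eq_norm_iteratedDeriv,
    Real.norm_eq_abs]

private lemma iteratedDeriv_const_exp_add (C b : ℝ) (S : ℝ → ℝ) (hS : ContDiff ℝ (⊤:ℕ∞) S)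
    (k : ℕ) : iteratedDeriv k (fun u => C * Real.exp (b*u) + S u)
      = fun u => C * b^k * Real.exp (b*u) + iteratedDeriv k S u := by
  induction k with
  | zero => simp
  | succ k ih =>
    rw [iteratedDeriv_succ, ih]
    funext u
    have h1 : HasDerivAt (fun u : ℝ => C * b^k * Real.exp (b*u))
        ((C * b^k) * (Real.exp (b*u) * b)) u := by
      have : HasDerivAt (fun u : ℝ => b*u) b u := by simpa using (hasDerivAt_id u).const_mul b
      exact this.exp.const_mul _
    have h2 : DifferentiableAt ℝ (iteratedDeriv k S) u :=
      (hS.differentiable_iteratedDeriv k (by exact_mod_cast lt_top_iff_ne_top.2 (by simp) : (k : WithTop ℕ∞) < ((⊤:ℕ∞):WithTop ℕ∞))).differentiableAt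
    rw [(h1.fun_add h2.hasDerivAt).deriv, ← iteratedDeriv_succ]
    ring_nf

private lemma nat_lt_infty (k : ℕ) : (k : WithTop ℕ∞) < ((⊤:ℕ∞) : WithTop ℕ∞) :=
  lt_of_lt_of_le (by exact_mod_cast Nat.lt_succ_self k : (k : WithTop ℕ∞) < (k+1 : ℕ))
    (nat_le_infty (k+1))

private theorem MAIN (γ m p : ℝ) (hγ : 0 < γ) (hm : 0 < m) (hp : p = 2*γ)
    (R Q ψ : ℝ → ℝ)
    (hQsm : ContDiff ℝ (⊤:ℕ∞) Q) (hψsm : ContDiff ℝ (⊤:ℕ∞) ψ)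
    (hRQ : ∀ u, HasDerivAt R (2 * Q u) u)
    (hψeq : ∀ u, ψ u = Q u + γ * R u)
    (hG0 : ∃ c, ∀ u ≤ (0:ℝ), |R u - m * Real.exp (-p*u)| ≤ c)
    (hQB : ∀ T : ℝ, ∀ k : ℕ, ∃ c, ∀ u ≤ T, |iteratedDeriv k Q u| ≤ c * Real.exp (-p*u))
    (hψB : ∀ T : ℝ, ∀ k : ℕ, ∃ c, ∀ u ≤ T, |iteratedDeriv k ψ u| ≤ c)
    (hψlim : ∃ L, Tendsto ψ atBot (nhds L))
    (a : ℝ) (ha : 0 < a) (f : ℝ → ℝ)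
    (hf : ContDiffOn ℝ (⊤:ℕ∞) f (Set.Ioo (-a) 0))
    (hf' : ∀ τ ∈ Set.Ioo (-a) (0:ℝ), deriv f τ < 0)
    (hfb : Tendsto f (nhdsWithin 0 (Set.Iio 0)) atBot)
    (hfried : ∀ τ ∈ Set.Ioo (-a) (0:ℝ), (deriv f τ)^2 = R (f τ)) :
    Tendsto (fun τ => (deriv f τ)^2 * Real.exp (2*γ*f τ)) (nhdsWithin 0 (Set.Iio 0)) (nhds m)
    ∧ (∃ L, Tendsto (fun τ => deriv (deriv f) τ + γ*(deriv f τ)^2)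
        (nhdsWithin 0 (Set.Iio 0)) (nhds L))
    ∧ ∃ δ : ℝ, 0 < δ ∧ ∀ k : ℕ, 1 ≤ k → ∃ c : ℝ, ∀ τ ∈ Set.Ioo (-δ) (0:ℝ),
        |iteratedDeriv k (fun s => deriv (deriv f) s + γ*(deriv f s)^2) τ| ≤ c * |deriv f τ|^k
        ∧ |iteratedDeriv k f τ| ≤ c * |deriv f τ|^k := by
  subst hp
  set I : Set ℝ := Set.Ioo (-a) 0 with hI
  have hIopen : IsOpen I := isOpen_Ioo
  -- basic differentiability facts
  have hfd : ∀ τ ∈ I, HasDerivAt f (deriv f τ) τ := fun τ hτ =>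
    (((hf τ hτ).contDiffAt (hIopen.mem_nhds hτ)).differentiableAt (by simp)).hasDerivAt
  have hdfC : ContDiffOn ℝ (⊤:ℕ∞) (deriv f) I :=
    hf.deriv_of_isOpen hIopen (le_of_eq (by rfl))
  have hdfd : ∀ τ ∈ I, HasDerivAt (deriv f) (deriv (deriv f) τ) τ := fun τ hτ =>
    (((hdfC τ hτ).contDiffAt (hIopen.mem_nhds hτ)).differentiableAt (by simp)).hasDerivAt
  -- second derivative identity
  have hf'' : ∀ τ ∈ I, deriv (deriv f) τ = Q (f τ) := by
    intro τ hτ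
    have hsq : HasDerivAt (fun t => (deriv f t)^2) (2 * deriv f τ * deriv (deriv f) τ) τ := by
      have := (hdfd τ hτ).fun_pow 2
      simpa [mul_comm, mul_assoc] using this
    have hcomp : HasDerivAt (fun t => R (f t)) (2 * Q (f τ) * deriv f τ) τ :=
      (hRQ (f τ)).comp τ (hfd τ hτ)
    have heq : (fun t => (deriv f t)^2) =ᶠ[nhds τ] fun t => R (f t) :=
      Filter.eventuallyEq_of_mem (hIopen.mem_nhds hτ) hfried
    have hsq' : HasDerivAt (fun t => (deriv f t)^2) (2 * Q (f τ) * deriv f τ) τ :=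
      hcomp.congr_of_eventuallyEq heq
    have huniq : 2 * deriv f τ * deriv (deriv f) τ = 2 * Q (f τ) * deriv f τ :=
      hsq.unique hsq'
    have hne : deriv f τ ≠ 0 := (hf' τ hτ).ne
    field_simp at huniq
    rcases mul_eq_mul_left_iff.1 (by rw [huniq] : deriv f τ * deriv (deriv f) τ = deriv f τ * Q (f τ)) with h | h
    · exact h
    · exact absurd h hne
  -- choose T₀
  obtain ⟨cG, hcG⟩ := hG0
  set cG' : ℝ := max cG 0 with hcG'def
  have hcG'0 : 0 ≤ cG' := le_max_right _ _
  have hcG2 : ∀ u ≤ (0:ℝ), |R u - m * Real.exp (-(2*γ)*u)| ≤ cG' :=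
    fun u hu => (hcG u hu).trans (le_max_left _ _)
  set K : ℝ := max 1 ((2*cG'+2)/m) with hKdef
  have hK1 : 1 ≤ K := le_max_left _ _
  set T₀ : ℝ := min 0 (-(Real.log K)/(2*γ)) with hT₀def
  have hT₀0 : T₀ ≤ 0 := min_le_left _ _
  have hT₀ : ∀ u ≤ T₀, 2*cG' + 2 ≤ m * Real.exp (-(2*γ)*u) := by
    intro u hu
    have h1 : Real.log K ≤ -(2*γ)*u := by
      have h2 : u ≤ -(Real.log K)/(2*γ) := le_trans hu (min_le_right _ _)
      have h3 : (0:ℝ) < 2*γ := by linarith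
      rw [le_div_iff₀ h3] at h2
      nlinarith
    have h4 : K ≤ Real.exp (-(2*γ)*u) := by
      calc K = Real.exp (Real.log K) := (Real.exp_log (by linarith)).symm
      _ ≤ _ := Real.exp_le_exp.2 h1
    have h5 : (2*cG'+2)/m ≤ K := le_max_right _ _
    rw [div_le_iff₀ hm] at h5
    nlinarith [Real.exp_pos (-(2*γ)*u)]
  have hRlow : ∀ u ≤ T₀, 1 ≤ R u ∧ Real.exp (-(2*γ)*u) ≤ 2/m * R u := by
    intro u hu
    have h1 := hcG2 u (le_trans hu hT₀0)
    have h2 := hT₀ u hu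
    have h3 := abs_le.1 h1
    constructor
    · nlinarith
    · rw [div_mul_eq_mul_div, le_div_iff₀ hm]
      nlinarith [Real.exp_pos (-(2*γ)*u)]
  -- choose δ
  have hev : {τ : ℝ | f τ ≤ T₀} ∈ nhdsWithin 0 (Set.Iio 0) :=
    hfb.eventually (eventually_le_atBot T₀)
  obtain ⟨l, hl, hsub⟩ := mem_nhdsLT_iff_exists_Ioo_subset.1 hev
  set δ : ℝ := min a (-l) with hδdef
  have hδpos : 0 < δ := lt_min ha (by simpa using hl)
  set J : Set ℝ := Set.Ioo (-δ) 0 with hJdef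
  have hJopen : IsOpen J := isOpen_Ioo
  have hJI : J ⊆ I := fun x hx =>
    ⟨lt_of_le_of_lt (neg_le_neg (min_le_left a (-l))) hx.1, hx.2⟩
  have hJT : ∀ τ ∈ J, f τ ≤ T₀ := by
    intro τ hτ
    apply hsub
    refine ⟨lt_of_le_of_lt (show l ≤ -δ by
      have := min_le_right a (-l); linarith) hτ.1, hτ.2⟩
  have hJf1 : ∀ τ ∈ J, 1 ≤ |deriv f τ| := by
    intro τ hτ
    have h1 : 1 ≤ (deriv f τ)^2 := by
      rw [hfried τ (hJI hτ)]; exact (hRlow _ (hJT τ hτ)).1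
    nlinarith [abs_nonneg (deriv f τ), sq_abs (deriv f τ)]
  have hJexp : ∀ τ ∈ J, Real.exp (-(2*γ)*f τ) ≤ 2/m * (deriv f τ)^2 := by
    intro τ hτ
    rw [hfried τ (hJI hτ)]; exact (hRlow _ (hJT τ hτ)).2
  -- eventual membership in I
  have hImem : I ∈ nhdsWithin 0 (Set.Iio 0) :=
    mem_nhdsLT_iff_exists_Ioo_subset.2 ⟨-a, by simpa using ha, subset_rfl⟩
  -- Condition 1
  have hcond1 : Tendsto (fun τ => (deriv f τ)^2 * Real.exp (2*γ*f τ))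
      (nhdsWithin 0 (Set.Iio 0)) (nhds m) := by
    have hz : Tendsto (fun τ => Real.exp (2*γ*f τ)) (nhdsWithin 0 (Set.Iio 0)) (nhds 0) := by
      have h1 : Tendsto (fun τ => 2*γ*f τ) (nhdsWithin 0 (Set.Iio 0)) atBot :=
        Filter.Tendsto.const_mul_atBot (by linarith : (0:ℝ) < 2*γ) hfb
      exact Real.tendsto_exp_atBot.comp h1
    have hzero : Tendsto (fun τ => (R (f τ) - m * Real.exp (-(2*γ)*f τ)) * Real.exp (2*γ*f τ))
        (nhdsWithin 0 (Set.Iio 0)) (nhds 0) := by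
      refine squeeze_zero_norm' (a := fun τ => cG' * Real.exp (2*γ*f τ)) ?_ ?_
      · filter_upwards [hfb.eventually (eventually_le_atBot T₀)] with τ hτ
        rw [Real.norm_eq_abs, abs_mul, abs_of_pos (Real.exp_pos _)]
        exact mul_le_mul_of_nonneg_right (hcG2 (f τ) (le_trans hτ hT₀0)) (Real.exp_pos _).le
      · simpa using hz.const_mul cG'
    have hmain : (fun τ => (deriv f τ)^2 * Real.exp (2*γ*f τ)) =ᶠ[nhdsWithin 0 (Set.Iio 0)]
        (fun τ => m + (R (f τ) - m * Real.exp (-(2*γ)*f τ)) * Real.exp (2*γ*f τ)) := by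
      filter_upwards [hImem] with τ hτ
      rw [hfried τ hτ]
      have hxy : Real.exp (-(2*γ)*f τ) * Real.exp (2*γ*f τ) = 1 := by
        rw [← Real.exp_add]
        norm_num
      have h2 : (R (f τ) - m * Real.exp (-(2*γ)*f τ)) * Real.exp (2*γ*f τ)
          = R (f τ) * Real.exp (2*γ*f τ) - m := by
        linear_combination (-m) * hxy
      rw [h2]; ring
    exact Tendsto.congr' hmain.symm (by simpa using tendsto_const_nhds.add hzero)
  -- Condition 2
  have hcond2 : ∃ L, Tendsto (fun τ => deriv (deriv f) τ + γ*(deriv f τ)^2)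
      (nhdsWithin 0 (Set.Iio 0)) (nhds L) := by
    obtain ⟨L, hL⟩ := hψlim
    refine ⟨L, Tendsto.congr' ?_ (hL.comp hfb)⟩
    filter_upwards [hImem] with τ hτ
    simp only [Function.comp]
    rw [hψeq (f τ), hf'' τ hτ, hfried τ hτ]
  -- uniform derivative bounds for Q on the ray
  have hQsOn : ∀ (j : ℕ), ∃ CQ : ℝ, 0 ≤ CQ ∧ ∀ i ≤ j, ∀ u ≤ T₀,
      |iteratedDeriv i Q u| ≤ CQ * Real.exp (-(2*γ)*u) := by
    intro j
    choose cQ hcQ using hQB (T₀+1)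
    refine ⟨∑ i ∈ Finset.range (j+1), |cQ i|,
      Finset.sum_nonneg (fun i _ => abs_nonneg _), fun i hi u hu => ?_⟩
    have h1 : cQ i ≤ ∑ i ∈ Finset.range (j+1), |cQ i| :=
      le_trans (le_abs_self _) (Finset.single_le_sum (fun i _ => abs_nonneg (cQ i))
        (Finset.mem_range.2 (Nat.lt_succ_of_le hi)))
    exact (hcQ i u (by linarith)).trans (mul_le_mul_of_nonneg_right h1 (Real.exp_pos _).le)
  -- derivative bounds for f
  have hfbound : ∀ k : ℕ, ∃ c : ℝ, 1 ≤ c ∧ ∀ τ ∈ J, ∀ i, 1 ≤ i → i ≤ k →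
      |iteratedDeriv i f τ| ≤ (c * |deriv f τ|) ^ i := by
    intro k
    induction k with
    | zero => exact ⟨1, le_rfl, fun τ hτ i h1 h2 => absurd (h1.trans h2) (by norm_num)⟩
    | succ k ih =>
      obtain ⟨c, hc1, hc⟩ := ih
      rcases Nat.eq_zero_or_pos k with rfl | hk
      · refine ⟨1, le_rfl, fun τ hτ i h1 h2 => ?_⟩
        interval_cases i
        simp [iteratedDeriv_one]
      · obtain ⟨j, rfl⟩ : ∃ j, k = j + 1 := ⟨k-1, by omega⟩
        obtain ⟨CQ, hCQ0, hCQb⟩ := hQsOn j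
        refine ⟨max c (max 1 ((j.factorial : ℝ) * (CQ * (2/m)) * c^j)),
          le_trans (le_max_left 1 _) (le_max_right _ _), fun τ hτ i h1 h2 => ?_⟩
        set Kc : ℝ := (j.factorial : ℝ) * (CQ * (2/m)) * c^j with hKcdef
        set c' : ℝ := max c (max 1 Kc) with hc'def
        have hcc' : c ≤ c' := le_max_left _ _
        have hc'1 : 1 ≤ c' := le_trans (le_max_left 1 Kc) (le_max_right _ _)
        have ht1 : 1 ≤ |deriv f τ| := hJf1 τ hτ
        have ht0 : (0:ℝ) ≤ |deriv f τ| := abs_nonneg _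
        rcases Nat.lt_or_ge i (j+2) with h2' | h2'
        · -- old cases
          refine le_trans (hc τ hτ i h1 (by omega)) ?_
          exact pow_le_pow_left₀ (by positivity)
            (mul_le_mul_of_nonneg_right hcc' ht0) i
        · have hi2 : i = j + 2 := by omega
          subst hi2
          have e1 : iteratedDeriv (j+2) f τ = iteratedDeriv j (Q ∘ f) τ := by
            rw [show j+2 = (j+1)+1 from rfl, iteratedDeriv_succ', iteratedDeriv_succ']
            exact iteratedDeriv_congr_of_isOpen hIopen (fun x hx => hf'' x hx) j τ (hJI hτ)
          have hmaps : MapsTo f J (Set.Iio (T₀+1)) := fun x hx =>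
            lt_of_le_of_lt (hJT x hx) (by linarith)
          have hcomp := norm_iteratedFDerivWithin_comp_le (𝕜 := ℝ)
            (hQsm.contDiffOn : ContDiffOn ℝ ((⊤:ℕ∞)) Q (Set.Iio (T₀+1)))
            (hf.mono hJI) (nat_le_infty j) (isOpen_Iio.uniqueDiffOn) (hJopen.uniqueDiffOn)
            hmaps hτ (C := CQ * Real.exp (-(2*γ)*f τ)) (D := c * |deriv f τ|)
            (fun i hi => ?_) (fun i hi1 hij => ?_)
          · rw [e1, abs_iteratedDeriv_eq_within hJopen hτ j]
            refine le_trans hcomp ?_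
            have hexp : Real.exp (-(2*γ)*f τ) ≤ 2/m * |deriv f τ|^2 := by
              have := hJexp τ hτ
              rwa [← sq_abs (deriv f τ)] at this
            have step1 : (j.factorial : ℝ) * (CQ * Real.exp (-(2*γ)*f τ)) * (c * |deriv f τ|)^j
                ≤ (j.factorial : ℝ) * (CQ * (2/m * |deriv f τ|^2)) * (c * |deriv f τ|)^j := by
              have h0 := mul_le_mul_of_nonneg_left hexp hCQ0
              have h3 : (0:ℝ) ≤ (j.factorial : ℝ) := by positivity
              have h4 : (0:ℝ) ≤ (c * |deriv f τ|)^j := by positivity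
              exact mul_le_mul_of_nonneg_right
                (mul_le_mul_of_nonneg_left h0 h3) h4
            refine le_trans step1 ?_
            have step2 : (j.factorial : ℝ) * (CQ * (2/m * |deriv f τ|^2)) * (c * |deriv f τ|)^j
                = Kc * |deriv f τ|^(j+2) := by
              rw [hKcdef, mul_pow]; ring
            rw [step2, mul_pow]
            have step3 : Kc ≤ c'^(j+2) := by
              refine le_trans (le_trans (le_max_right 1 Kc) (le_max_right c _)) ?_
              exact le_self_pow₀ hc'1 (by omega)
            exact mul_le_mul_of_nonneg_right step3 (by positivity)
          · rw [iteratedFDerivWithin_of_isOpen i isOpen_Iio (hmaps hτ),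
              norm_iteratedFDeriv_eq_norm_iteratedDeriv, Real.norm_eq_abs]
            exact hCQb i hi (f τ) (hJT τ hτ)
          · rw [iteratedFDerivWithin_of_isOpen i hJopen hτ,
              norm_iteratedFDeriv_eq_norm_iteratedDeriv, Real.norm_eq_abs]
            exact hc τ hτ i hi1 (by omega)
  -- final assembly
  refine ⟨hcond1, hcond2, δ, hδpos, fun k hk => ?_⟩
  obtain ⟨c, hc1, hc⟩ := hfbound k
  choose cψ hcψ using hψB (T₀+1)
  have hCψb : ∀ i ≤ k, ∀ u ≤ T₀, |iteratedDeriv i ψ u| ≤ ∑ i ∈ Finset.range (k+1), |cψ i| := by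
    intro i hi u hu
    refine (hcψ i u (by linarith)).trans (le_trans (le_abs_self _)
      (Finset.single_le_sum (fun i _ => abs_nonneg (cψ i))
        (Finset.mem_range.2 (Nat.lt_succ_of_le hi))))
  set Cψ : ℝ := ∑ i ∈ Finset.range (k+1), |cψ i| with hCψdef
  have hCψ0 : 0 ≤ Cψ := Finset.sum_nonneg fun i _ => abs_nonneg _
  have ht0' : ∀ τ ∈ J, (0:ℝ) ≤ |deriv f τ| := fun τ _ => abs_nonneg _
  refine ⟨max ((k.factorial : ℝ) * Cψ * c^k) (c^k), fun τ hτ => ⟨?_, ?_⟩⟩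
  · -- bound for ψ ∘ f
    have e0 : ∀ x ∈ I, (fun s => deriv (deriv f) s + γ*(deriv f s)^2) x = (ψ ∘ f) x := by
      intro x hx
      show deriv (deriv f) x + γ*(deriv f x)^2 = ψ (f x)
      rw [hf'' x hx, hfried x hx, hψeq (f x)]
    have e1 : iteratedDeriv k (fun s => deriv (deriv f) s + γ*(deriv f s)^2) τ
        = iteratedDeriv k (ψ ∘ f) τ :=
      iteratedDeriv_congr_of_isOpen hIopen e0 k τ (hJI hτ)
    have hmaps : MapsTo f J (Set.Iio (T₀+1)) := fun x hx =>
      lt_of_le_of_lt (hJT x hx) (by linarith)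
    have hcomp := norm_iteratedFDerivWithin_comp_le (𝕜 := ℝ)
      (hψsm.contDiffOn : ContDiffOn ℝ ((⊤:ℕ∞)) ψ (Set.Iio (T₀+1)))
      (hf.mono hJI) (nat_le_infty k) (isOpen_Iio.uniqueDiffOn) (hJopen.uniqueDiffOn)
      hmaps hτ (C := Cψ) (D := c * |deriv f τ|)
      (fun i hi => ?_) (fun i hi1 hik => ?_)
    · rw [e1, abs_iteratedDeriv_eq_within hJopen hτ k]
      refine le_trans hcomp ?_
      rw [mul_pow, show (k.factorial : ℝ) * Cψ * (c^k * |deriv f τ|^k)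
        = ((k.factorial : ℝ) * Cψ * c^k) * |deriv f τ|^k by ring]
      exact mul_le_mul_of_nonneg_right (le_max_left _ _) (by positivity)
    · rw [iteratedFDerivWithin_of_isOpen i isOpen_Iio (hmaps hτ),
        norm_iteratedFDeriv_eq_norm_iteratedDeriv, Real.norm_eq_abs]
      exact hCψb i hi (f τ) (hJT τ hτ)
    · rw [iteratedFDerivWithin_of_isOpen i hJopen hτ,
        norm_iteratedFDeriv_eq_norm_iteratedDeriv, Real.norm_eq_abs]
      exact hc τ hτ i hi1 hik
  · -- bound for f
    refine le_trans (hc τ hτ k hk le_rfl) ?_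
    rw [mul_pow]
    exact mul_le_mul_of_nonneg_right (le_max_right _ _) (by positivity)


/-- `f` satisfies the ARW conditions with constant `γ > 0` and mass `mt > 0`:
`f'² e^{2γf} → mt` as `τ → 0⁻`, the limit of `f'' + γ f'²` exists, and the iterated
derivatives of `f'' + γ f'²` and of `f` of order `k ≥ 1` are bounded by `c_k |f'|^k`
near the singularity. -/
def ARWConds (γ mt : ℝ) (f : ℝ → ℝ) : Prop :=
  Filter.Tendsto (fun τ => (deriv f τ) ^ 2 * Real.exp (2 * γ * f τ))
      (nhdsWithin 0 (Set.Iio 0)) (nhds mt)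
  ∧ (∃ L : ℝ, Filter.Tendsto (fun τ => deriv (deriv f) τ + γ * (deriv f τ) ^ 2)
      (nhdsWithin 0 (Set.Iio 0)) (nhds L))
  ∧ ∃ δ : ℝ, 0 < δ ∧ ∀ k : ℕ, 1 ≤ k → ∃ c : ℝ,
      ∀ τ ∈ Set.Ioo (-δ) (0:ℝ),
        |iteratedDeriv k (fun s => deriv (deriv f) s + γ * (deriv f s) ^ 2) τ|
            ≤ c * |deriv f τ| ^ k
        ∧ |iteratedDeriv k f τ| ≤ c * |deriv f τ| ^ k

/-- If `ω₀ ≤ -(n-1)` and `lam` has bounded derivatives of all orders, then every brane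
scale function satisfies the ARW conditions with constant `γ = (n-1)/2` and mass `m`;
in particular `f'² e^{(n-1)f} → m` as `τ → 0⁻`. -/
theorem arw_sufficient_small_omega
    (n : ℕ) (hn : 3 ≤ n)
    (m Λ κt κ σ ω₀ ρ₀ : ℝ)
    (hm : 0 < m) (hΛ : Λ ≤ 0)
    (hκt : κt = -1 ∨ κt = 0 ∨ κt = 1) (hΛκt : Λ = 0 → κt = 1)
    (hκ : κ ≠ 0) (hρ₀ : 0 < ρ₀)
    (lam μt : ℝ → ℝ)
    (hlam : ContDiff ℝ (⊤ : ℕ∞) lam)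
    (hlam0 : Filter.Tendsto lam Filter.atBot (nhds 0))
    (hμt : ∀ t : ℝ, HasDerivAt μt (lam t) t)
    (hμt0 : Filter.Tendsto μt Filter.atBot (nhds 0))
    (a : ℝ) (ha : 0 < a) (f : ℝ → ℝ)
    (hf : ContDiffOn ℝ (⊤ : ℕ∞) f (Set.Ioo (-a) 0))
    (hf' : ∀ τ ∈ Set.Ioo (-a) (0:ℝ), deriv f τ < 0)
    (hfb : Filter.Tendsto f (nhdsWithin 0 (Set.Iio 0)) Filter.atBot)
    (hFried : ∀ τ ∈ Set.Ioo (-a) (0:ℝ),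
      (deriv f τ) ^ 2
        = m * Real.exp (-((n : ℝ) - 1) * f τ)
          + (2 * Λ / ((n : ℝ) * ((n : ℝ) + 1))) * Real.exp (2 * f τ) - κt
          + (κ ^ 2 / (n : ℝ) ^ 2)
            * (σ + ρ₀ * Real.exp (-((n : ℝ) + ω₀) * f τ - μt (f τ))) ^ 2
            * Real.exp (2 * f τ))
    (hω₀ : ω₀ ≤ -((n : ℝ) - 1))
    (hlamB : ∀ k : ℕ, ∃ c : ℝ, ∀ t : ℝ, |iteratedDeriv k lam t| ≤ c) :
    ARWConds (((n : ℝ) - 1) / 2) m f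
      ∧ Filter.Tendsto (fun τ => (deriv f τ) ^ 2 * Real.exp (((n : ℝ) - 1) * f τ))
          (nhdsWithin 0 (Set.Iio 0)) (nhds m) := by
  have hN : (3:ℝ) ≤ (n:ℝ) := by exact_mod_cast hn
  have hb1 : (n:ℝ) + ω₀ ≤ 1 := by linarith
  have hlamRT : RT lam := ⟨hlam, fun T k => (hlamB k).imp (fun c h u _ => h u)⟩
  have hμdiff : Differentiable ℝ μt := fun t => (hμt t).differentiableAt
  have hμtb : ∀ T : ℝ, ∃ M, ∀ u ≤ T, |μt u| ≤ M :=
    fun T => bdd_on_ray hμdiff.continuous hμt0 T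
  have hμderiv : _root_.deriv μt = lam := funext fun t => (hμt t).deriv
  have hμC : ContDiff ℝ (⊤:ℕ∞) μt :=
    contDiff_infty_iff_deriv.2 ⟨hμdiff, hμderiv ▸ hlam⟩
  -- ray-tame exponentials
  have hq₁RT : RT (fun u => Real.exp ((2-((n:ℝ)+ω₀))*u - 1*μt u)) :=
    RT_exp lam μt hlamRT hμt hμtb _ 1 (by linarith)
  have hq₂RT : RT (fun u => Real.exp ((2-2*((n:ℝ)+ω₀))*u - 2*μt u)) :=
    RT_exp lam μt hlamRT hμt hμtb _ 2 (by linarith)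
  have he2RT : RT (fun u => Real.exp (2*u)) := by
    have h := RT_exp lam μt hlamRT hμt hμtb 2 0 (by norm_num)
    have he : (fun u => Real.exp (2*u - 0*μt u)) = (fun u => Real.exp (2*u)) := by
      funext u; norm_num
    rwa [he] at h
  set q₁ : ℝ → ℝ := fun u => Real.exp ((2-((n:ℝ)+ω₀))*u - 1*μt u) with hq₁def
  set q₂ : ℝ → ℝ := fun u => Real.exp ((2-2*((n:ℝ)+ω₀))*u - 2*μt u) with hq₂def
  set S : ℝ → ℝ := fun u => 2*Λ/((n:ℝ)*((n:ℝ)+1)) * Real.exp (2*u)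
      + κ^2/(n:ℝ)^2 * (-((n:ℝ)+ω₀) - lam u) * (σ*ρ₀*q₁ u + ρ₀^2*q₂ u)
      + κ^2/(n:ℝ)^2 * (σ^2*Real.exp (2*u) + 2*σ*ρ₀*q₁ u + ρ₀^2*q₂ u) with hSdef
  set GG : ℝ → ℝ := fun u => 2*Λ/((n:ℝ)*((n:ℝ)+1)) * Real.exp (2*u) - κt
      + κ^2/(n:ℝ)^2 * (σ^2*Real.exp (2*u) + 2*σ*ρ₀*q₁ u + ρ₀^2*q₂ u) with hGGdef
  set R : ℝ → ℝ := fun u => m * Real.exp (-((n:ℝ)-1)*u)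
      + 2*Λ/((n:ℝ)*((n:ℝ)+1)) * Real.exp (2*u) - κt
      + κ^2/(n:ℝ)^2 * (σ + ρ₀ * Real.exp (-((n:ℝ)+ω₀)*u - μt u))^2 * Real.exp (2*u) with hRdef
  set Q : ℝ → ℝ := fun u => (-(((n:ℝ)-1)/2)*m) * Real.exp (-((n:ℝ)-1)*u) + S u with hQdef
  set ψ : ℝ → ℝ := fun u => Q u + (((n:ℝ)-1)/2) * R u with hψdef
  -- ray-tameness of S and GG
  have hSRT : RT S := by
    rw [hSdef]
    exact (((RT_const (2*Λ/((n:ℝ)*((n:ℝ)+1)))).mul he2RT).add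
      (((RT_const (κ^2/(n:ℝ)^2)).mul ((RT_const (-((n:ℝ)+ω₀))).sub hlamRT)).mul
        (((RT_const (σ*ρ₀)).mul hq₁RT).add ((RT_const (ρ₀^2)).mul hq₂RT)))).add
      ((RT_const (κ^2/(n:ℝ)^2)).mul ((((RT_const (σ^2)).mul he2RT).add
        ((RT_const (2*σ*ρ₀)).mul hq₁RT)).add ((RT_const (ρ₀^2)).mul hq₂RT)))
  have hGGRT : RT GG := by
    rw [hGGdef]
    exact (((RT_const (2*Λ/((n:ℝ)*((n:ℝ)+1)))).mul he2RT).sub (RT_const κt)).add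
      ((RT_const (κ^2/(n:ℝ)^2)).mul ((((RT_const (σ^2)).mul he2RT).add
        ((RT_const (2*σ*ρ₀)).mul hq₁RT)).add ((RT_const (ρ₀^2)).mul hq₂RT)))
  -- exponential identities
  have hq₁e : ∀ u : ℝ, q₁ u = Real.exp (-((n:ℝ)+ω₀)*u - μt u) * Real.exp (2*u) := by
    intro u
    simp only [hq₁def]
    rw [← Real.exp_add]
    congr 1; ring
  have hq₂e : ∀ u : ℝ, q₂ u = Real.exp (-((n:ℝ)+ω₀)*u - μt u)^2 * Real.exp (2*u) := by
    intro u
    simp only [hq₂def]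
    rw [sq, ← Real.exp_add, ← Real.exp_add]
    congr 1; ring
  -- R in terms of GG
  have hReq : ∀ u : ℝ, R u = m * Real.exp (-((n:ℝ)-1)*u) + GG u := by
    intro u
    simp only [hRdef, hGGdef]
    rw [hq₁e u, hq₂e u]; ring
  -- ψ in terms of S and GG
  have hψfun : ψ = fun u => S u + (((n:ℝ)-1)/2) * GG u := by
    funext u
    simp only [hψdef, hQdef, hRdef, hGGdef, hSdef]
    rw [hq₁e u, hq₂e u]; ring
  -- smoothness
  have e1C : ContDiff ℝ (⊤:ℕ∞) (fun u : ℝ => Real.exp (-((n:ℝ)-1)*u)) :=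
    Real.contDiff_exp.comp (contDiff_const.mul contDiff_id)
  have e2C : ContDiff ℝ (⊤:ℕ∞) (fun u : ℝ => Real.exp (2*u)) :=
    Real.contDiff_exp.comp (contDiff_const.mul contDiff_id)
  have hEC : ContDiff ℝ (⊤:ℕ∞) (fun u : ℝ => σ + ρ₀ * Real.exp (-((n:ℝ)+ω₀)*u - μt u)) :=
    contDiff_const.add (contDiff_const.mul
      (Real.contDiff_exp.comp ((contDiff_const.mul contDiff_id).sub hμC)))
  have hRsm : ContDiff ℝ (⊤:ℕ∞) R := by
    rw [hRdef]
    exact (((contDiff_const.mul e1C).add (contDiff_const.mul e2C)).sub contDiff_const).add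
      ((contDiff_const.mul (hEC.pow 2)).mul e2C)
  have hQsm : ContDiff ℝ (⊤:ℕ∞) Q := by
    rw [hQdef]
    exact (contDiff_const.mul e1C).add hSRT.1
  have hψsm : ContDiff ℝ (⊤:ℕ∞) ψ := by
    rw [hψdef]
    exact hQsm.add (contDiff_const.mul hRsm)
  -- the derivative identity R' = 2 Q
  have hRQ : ∀ u : ℝ, HasDerivAt R (2 * Q u) u := by
    intro u
    have hh : HasDerivAt (fun u : ℝ => -((n:ℝ)+ω₀)*u - μt u) (-((n:ℝ)+ω₀) - lam u) u := by
      have h1 : HasDerivAt (fun u : ℝ => -((n:ℝ)+ω₀)*u) (-((n:ℝ)+ω₀)) u := by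
        simpa using (hasDerivAt_id u).const_mul (-((n:ℝ)+ω₀))
      exact h1.sub (hμt u)
    have hE : HasDerivAt (fun u : ℝ => σ + ρ₀ * Real.exp (-((n:ℝ)+ω₀)*u - μt u))
        (ρ₀ * (Real.exp (-((n:ℝ)+ω₀)*u - μt u) * (-((n:ℝ)+ω₀) - lam u))) u := by
      simpa using (hh.exp.const_mul ρ₀).const_add σ
    have h2u : HasDerivAt (fun u : ℝ => Real.exp (2*u)) (Real.exp (2*u) * 2) u := by
      have h1 : HasDerivAt (fun u : ℝ => 2*u) 2 u := by
        simpa using (hasDerivAt_id u).const_mul (2:ℝ)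
      exact h1.exp
    have hpe : HasDerivAt (fun u : ℝ => Real.exp (-((n:ℝ)-1)*u))
        (Real.exp (-((n:ℝ)-1)*u) * (-((n:ℝ)-1))) u := by
      have h1 : HasDerivAt (fun u : ℝ => -((n:ℝ)-1)*u) (-((n:ℝ)-1)) u := by
        simpa using (hasDerivAt_id u).const_mul (-((n:ℝ)-1))
      exact h1.exp
    have hbig := (((hpe.const_mul m).fun_add
        (h2u.const_mul (2*Λ/((n:ℝ)*((n:ℝ)+1))))).fun_sub (hasDerivAt_const u κt)).fun_add
      (((hE.fun_pow 2).const_mul (κ^2/(n:ℝ)^2)).fun_mul h2u)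
    rw [hRdef]
    refine hbig.congr_deriv ?_
    simp only [hQdef, hSdef]
    rw [hq₁e u, hq₂e u]
    push_cast
    ring_nf
  -- limits
  have hexpLin : ∀ c : ℝ, 0 < c → Tendsto (fun u : ℝ => Real.exp (c*u)) atBot (nhds 0) := by
    intro c hc
    exact Real.tendsto_exp_atBot.comp ((tendsto_const_mul_atBot_of_pos hc).2 tendsto_id)
  have hexp0 : ∀ c d : ℝ, 0 < c →
      Tendsto (fun u : ℝ => Real.exp (c*u - d*μt u)) atBot (nhds 0) := by
    intro c d hc
    obtain ⟨M, hM⟩ := hμtb 0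
    apply squeeze_zero_norm' (a := fun u : ℝ => Real.exp (|d| * M) * Real.exp (c*u))
    · filter_upwards [eventually_le_atBot (0:ℝ)] with u hu
      rw [Real.norm_eq_abs, abs_of_pos (Real.exp_pos _), ← Real.exp_add]
      apply Real.exp_le_exp.2
      have h1 : -(d*μt u) ≤ |d| * M :=
        calc -(d*μt u) ≤ |d * μt u| := neg_le_abs _
        _ = |d| * |μt u| := abs_mul _ _
        _ ≤ |d| * M := mul_le_mul_of_nonneg_left (hM u hu) (abs_nonneg d)
      linarith
    · simpa using (hexpLin c hc).const_mul (Real.exp (|d| * M))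
  have he2lim : Tendsto (fun u : ℝ => Real.exp (2*u)) atBot (nhds 0) := hexpLin 2 two_pos
  have hq₁lim : Tendsto q₁ atBot (nhds 0) := by
    rw [hq₁def]; exact hexp0 _ 1 (by linarith)
  have hq₂lim : ∃ L₂, Tendsto q₂ atBot (nhds L₂) := by
    rcases lt_or_eq_of_le (by linarith : (0:ℝ) ≤ 2-2*((n:ℝ)+ω₀)) with h | h
    · exact ⟨0, by rw [hq₂def]; exact hexp0 _ 2 h⟩
    · refine ⟨Real.exp 0, ?_⟩
      rw [hq₂def]
      have hfun : (fun u : ℝ => (2-2*((n:ℝ)+ω₀))*u - 2*μt u) = (fun u => 0 - 2*μt u) := by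
        funext u; rw [← h, zero_mul]
      have h4 : Tendsto (fun u : ℝ => (2-2*((n:ℝ)+ω₀))*u - 2*μt u) atBot (nhds 0) := by
        rw [hfun]
        have h5 : Tendsto (fun u : ℝ => (0:ℝ) - 2*μt u) atBot (nhds (0 - 2*0)) :=
          tendsto_const_nhds.sub (hμt0.const_mul 2)
        simpa using h5
      exact (Real.continuous_exp.tendsto 0).comp h4
  obtain ⟨L₂, hq₂l⟩ := hq₂lim
  have hSlim : Tendsto S atBot (nhds
      (2*Λ/((n:ℝ)*((n:ℝ)+1)) * 0
        + κ^2/(n:ℝ)^2 * (-((n:ℝ)+ω₀) - 0) * (σ*ρ₀*0 + ρ₀^2*L₂)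
        + κ^2/(n:ℝ)^2 * (σ^2*0 + 2*σ*ρ₀*0 + ρ₀^2*L₂))) := by
    rw [hSdef]
    exact ((tendsto_const_nhds.mul he2lim).add
      ((tendsto_const_nhds.mul (tendsto_const_nhds.sub hlam0)).mul
        ((tendsto_const_nhds.mul hq₁lim).add (tendsto_const_nhds.mul hq₂l)))).add
      (tendsto_const_nhds.mul (((tendsto_const_nhds.mul he2lim).add
        (tendsto_const_nhds.mul hq₁lim)).add (tendsto_const_nhds.mul hq₂l)))
  have hGGlim : Tendsto GG atBot (nhds
      (2*Λ/((n:ℝ)*((n:ℝ)+1)) * 0 - κt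
        + κ^2/(n:ℝ)^2 * (σ^2*0 + 2*σ*ρ₀*0 + ρ₀^2*L₂))) := by
    rw [hGGdef]
    exact ((tendsto_const_nhds.mul he2lim).sub tendsto_const_nhds).add
      (tendsto_const_nhds.mul (((tendsto_const_nhds.mul he2lim).add
        (tendsto_const_nhds.mul hq₁lim)).add (tendsto_const_nhds.mul hq₂l)))
  obtain ⟨LS, hSlim'⟩ : ∃ L, Tendsto S atBot (nhds L) := ⟨_, hSlim⟩
  obtain ⟨LG, hGGlim'⟩ : ∃ L, Tendsto GG atBot (nhds L) := ⟨_, hGGlim⟩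
  have hψlim : ∃ L, Tendsto ψ atBot (nhds L) :=
    ⟨LS + (((n:ℝ)-1)/2) * LG, by
      rw [hψfun]; exact hSlim'.add (tendsto_const_nhds.mul hGGlim')⟩
  -- remaining MAIN hypotheses
  have hG0 : ∃ c, ∀ u ≤ (0:ℝ), |R u - m * Real.exp (-((n:ℝ)-1)*u)| ≤ c := by
    obtain ⟨c, hc⟩ := hGGRT.2 0 0
    refine ⟨c, fun u hu => ?_⟩
    rw [show R u - m * Real.exp (-((n:ℝ)-1)*u) = GG u by rw [hReq u]; ring]
    have := hc u hu
    rwa [iteratedDeriv_zero] at this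
  have hQB : ∀ T : ℝ, ∀ k : ℕ, ∃ c, ∀ u ≤ T,
      |iteratedDeriv k Q u| ≤ c * Real.exp (-((n:ℝ)-1)*u) := by
    intro T k
    obtain ⟨cS, hcS⟩ := hSRT.2 T k
    refine ⟨|(-(((n:ℝ)-1)/2)*m)| * |(-((n:ℝ)-1))|^k + |cS| * Real.exp (((n:ℝ)-1)*T),
      fun u hu => ?_⟩
    have hQeq : iteratedDeriv k Q u
        = (-(((n:ℝ)-1)/2)*m) * (-((n:ℝ)-1))^k * Real.exp (-((n:ℝ)-1)*u)
          + iteratedDeriv k S u := by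
      rw [hQdef, iteratedDeriv_const_exp_add (-(((n:ℝ)-1)/2)*m) (-((n:ℝ)-1)) S hSRT.1]
    rw [hQeq]
    have h1 : |(-(((n:ℝ)-1)/2)*m) * (-((n:ℝ)-1))^k * Real.exp (-((n:ℝ)-1)*u)|
        = |(-(((n:ℝ)-1)/2)*m)| * |(-((n:ℝ)-1))|^k * Real.exp (-((n:ℝ)-1)*u) := by
      rw [abs_mul, abs_mul, abs_pow, abs_of_pos (Real.exp_pos _)]
    have h2 : |iteratedDeriv k S u| ≤ |cS| := (hcS u hu).trans (le_abs_self _)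
    have h3 : (1:ℝ) ≤ Real.exp (((n:ℝ)-1)*T) * Real.exp (-((n:ℝ)-1)*u) := by
      rw [← Real.exp_add]
      calc (1:ℝ) = Real.exp 0 := Real.exp_zero.symm
      _ ≤ _ := Real.exp_le_exp.2 (by nlinarith)
    refine (abs_add_le _ _).trans ?_
    rw [h1, add_mul]
    have h4 : |cS| ≤ |cS| * (Real.exp (((n:ℝ)-1)*T) * Real.exp (-((n:ℝ)-1)*u)) := by
      nlinarith [abs_nonneg cS]
    have h5 : |iteratedDeriv k S u| ≤ |cS| * Real.exp (((n:ℝ)-1)*T) * Real.exp (-((n:ℝ)-1)*u) := by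
      rw [mul_assoc]; exact h2.trans h4
    linarith
  have hψB : ∀ T : ℝ, ∀ k : ℕ, ∃ c, ∀ u ≤ T, |iteratedDeriv k ψ u| ≤ c := by
    have hψRT : RT ψ := by
      rw [hψfun]
      exact hSRT.add ((RT_const (((n:ℝ)-1)/2)).mul hGGRT)
    exact fun T k => hψRT.2 T k
  have hfried : ∀ τ ∈ Set.Ioo (-a) (0:ℝ), (deriv f τ)^2 = R (f τ) :=
    fun τ hτ => hFried τ hτ
  obtain ⟨h1, h2, h3⟩ := MAIN (((n:ℝ)-1)/2) m ((n:ℝ)-1) (by linarith) hm (by ring)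
    R Q ψ hQsm hψsm hRQ (fun u => by rw [hψdef]) hG0 hQB hψB hψlim a ha f hf hf' hfb hfried
  refine ⟨⟨h1, h2, h3⟩, ?_⟩
  have heq : (fun τ => (deriv f τ)^2 * Real.exp (((n:ℝ)-1) * f τ))
      = (fun τ => (deriv f τ)^2 * Real.exp (2*(((n:ℝ)-1)/2) * f τ)) := by
    funext τ
    rw [show 2*(((n:ℝ)-1)/2) = ((n:ℝ)-1) by ring]
  rw [heq]
  exact h1
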